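/- arXiv:1006.4427 — 2 statements merged into one kernel-verified Lean document; each statement's English description precedes it below -/
import Mathlib

section
/- For any p > 0 there exists C_p > 0 such that, with probability at least 1 − |Λ|^{−p}, the following holds: for every j such that E_j(ω,Λ) ∈ I (i.e. the eigenvalue is in the localized region), the diameter of the set C(φ_j(ω,Λ)) of localization centers of the associated normalized eigenvector is less than C_p log|Λ|. -/
open MeasureTheory ProbabilityTheory Filter Topology Finset
open scoped Pointwise ENNReal

noncomputable section

/-- The lattice `ℤ^d`. -/
abbrev ZLat (d : ℕ) := Fin d → ℤ

/-- The discrete torus `Λ_L` of side `2L+1` (box with periodic boundary conditions). -/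
abbrev Box (d L : ℕ) := Fin d → ZMod (2 * L + 1)

/-- The representative of a point of `ZMod (2L+1)` in `[-L, L]`. -/
def rep (L : ℕ) (x : ZMod (2 * L + 1)) : ℤ := (x.val : ℤ) - (L : ℤ)

/-- The representative in `[-L,L]^d ∩ ℤ^d` of a point of the torus. -/
def repPt {d : ℕ} (L : ℕ) (m : Box d L) : ZLat d := fun i => rep L (m i)

/-- Nearest neighbours on the torus. -/
def Adj {d L : ℕ} (m n : Box d L) : Prop :=
  ∃ i, (m i = n i + 1 ∨ m i + 1 = n i) ∧ ∀ j, j ≠ i → m j = n j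

instance {d L : ℕ} (m n : Box d L) : Decidable (Adj m n) := by
  unfold Adj; infer_instance

lemma Adj.symm' {d L : ℕ} {m n : Box d L} (h : Adj m n) : Adj n m := by
  obtain ⟨i, h1, h2⟩ := h
  refine ⟨i, ?_, fun j hj => (h2 j hj).symm⟩
  rcases h1 with h1 | h1
  · exact Or.inr h1.symm
  · exact Or.inl h1.symm

/-- The finite volume Anderson Hamiltonian `H_ω(Λ_L) = -Δ + V` on the box `Λ_L`
with periodic boundary conditions, as a matrix. -/
def ham (d L : ℕ) (v : ZLat d → ℝ) : Matrix (Box d L) (Box d L) ℝ := fun m n =>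
  (if Adj m n then (1 : ℝ) else 0) + (if m = n then v (repPt L n) else 0)

lemma ham_isHermitian (d L : ℕ) (v : ZLat d → ℝ) : (ham d L v).IsHermitian := by
  show (ham d L v).conjTranspose = ham d L v
  ext m n
  simp only [Matrix.conjTranspose_apply, star_trivial, ham]
  by_cases hmn : n = m
  · subst hmn; rfl
  · have h1 : ¬m = n := fun h => hmn h.symm
    rw [if_neg hmn, if_neg h1]
    by_cases ha : Adj n m
    · rw [if_pos ha, if_pos ha.symm']
    · rw [if_neg ha, if_neg fun h => ha h.symm']

/-- The number of sites of the box, `|Λ_L| = (2L+1)^d`. -/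
abbrev nsites (d L : ℕ) : ℕ := Fintype.card (Box d L)

/-- The volume `|Λ_L| = (2L+1)^d` as a real number. -/
def volΛ (d L : ℕ) : ℝ := ((2 * L + 1 : ℕ) : ℝ) ^ d

/-- The eigenvalues `E_1(ω,Λ) ≤ ⋯ ≤ E_N(ω,Λ)` of the finite volume Hamiltonian,
ordered increasingly and repeated according to multiplicity. -/
def sortedEig (d L : ℕ) (v : ZLat d → ℝ) : Fin (nsites d L) → ℝ :=
  (ham_isHermitian d L v).eigenvalues₀ ∘ ⇑(Tuple.sort (ham_isHermitian d L v).eigenvalues₀)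

open Classical in
/-- Number of indices `j` satisfying a predicate. -/
def countGen (d L : ℕ) (P : Fin (nsites d L) → Prop) : ℕ :=
  (Finset.univ.filter P).card

/-- number of rescaled eigenvalues `ξ_j = |Λ| ν₀ (E_j - E₀)` lying in `U`. -/
def countXi (d L : ℕ) (v : ZLat d → ℝ) (ν₀ E₀ : ℝ) (U : Set ℝ) : ℕ :=
  countGen d L fun j => volΛ d L * ν₀ * (sortedEig d L v j - E₀) ∈ U

/-- number of eigenvalues of `H_ω(Λ)` lying in `U`. -/
def countEig (d L : ℕ) (v : ZLat d → ℝ) (U : Set ℝ) : ℕ :=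
  countGen d L fun j => sortedEig d L v j ∈ U

/-- `γ₀` is a localization center of `φ : ℓ²(Λ)`, i.e. a point where `|φ|` is maximal. -/
def IsLocCenter {d L : ℕ} (φ : Box d L → ℝ) (γ₀ : Box d L) : Prop :=
  ∀ γ, |φ γ| ≤ |φ γ₀|

/-- The distance of two points of the torus, viewed in `[-L,L]^d ∩ ℤ^d`. -/
def boxDist {d : ℕ} (L : ℕ) (m n : Box d L) : ℝ :=
  ((Finset.univ.sup fun i => (rep L (m i) - rep L (n i)).natAbs : ℕ) : ℝ)

/-- `φ` is a complete orthonormal system of eigenvectors of `H_ω(Λ)`, with `φ j` an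
eigenvector associated to the `j`-th eigenvalue `E_j(ω,Λ)`. -/
def IsEigenSystem (d L : ℕ) (v : ZLat d → ℝ) (φ : Fin (nsites d L) → Box d L → ℝ) : Prop :=
  (∀ j, (ham d L v).mulVec (φ j) = sortedEig d L v j • φ j) ∧
  (∀ j, (∑ γ, φ j γ ^ 2) = 1) ∧
  (∀ j k, j ≠ k → (∑ γ, φ j γ * φ k γ) = 0)

/-- The random potential `(V ω n)_{n ∈ ℤ^d} = (ω_n)` is i.i.d. with a common distribution
admitting a compactly supported bounded density `g`. -/
structure AndersonPotential (d : ℕ) {Ω : Type*} [MeasurableSpace Ω] (Pr : Measure Ω)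
    (V : Ω → ZLat d → ℝ) (g : ℝ → ℝ) : Prop where
  meas : ∀ n, Measurable fun ω => V ω n
  indep : iIndepFun (fun n ω => V ω n) Pr
  distrib : ∀ n, Pr.map (fun ω => V ω n) = volume.withDensity fun x => ENNReal.ofReal (g x)
  g_nonneg : ∀ x, 0 ≤ g x
  g_bounded : ∃ M, ∀ x, g x ≤ M
  g_compact : HasCompactSupport g

/-- `I` is contained in the region of complete localization of `H_ω`: with probability at
least `1 - |Λ|^{-p}`, every eigenfunction of `H_ω(Λ)` with eigenvalue in `I` decays
exponentially away from its localization centers (property (Loc)). -/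
def CompleteLocRegion (d : ℕ) {Ω : Type*} [MeasurableSpace Ω] (Pr : Measure Ω)
    (V : Ω → ZLat d → ℝ) (I : Set ℝ) : Prop :=
  ∃ γc > (0 : ℝ), ∀ p > (0 : ℝ), ∃ C > (0 : ℝ), ∀ L : ℕ, 1 ≤ L →
    1 - volΛ d L ^ (-p) ≤
      (Pr {ω | ∀ E ∈ I, ∀ φ : Box d L → ℝ,
        (ham d L (V ω)).mulVec φ = E • φ → (∑ γ, φ γ ^ 2) = 1 →
        ∀ γ₀, IsLocCenter φ γ₀ → ∀ γ,
          |φ γ| ≤ C * volΛ d L ^ C * Real.exp (-γc * boxDist L γ₀ γ)}).toReal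

/-- The Wegner estimate (W) on `I`. -/
def WegnerEstimate (d : ℕ) {Ω : Type*} [MeasurableSpace Ω] (Pr : Measure Ω)
    (V : Ω → ZLat d → ℝ) (I : Set ℝ) : Prop :=
  ∃ C > (0 : ℝ), ∀ L : ℕ, ∀ a b : ℝ, a ≤ b → Set.Icc a b ⊆ I →
    (Pr {ω | 1 ≤ countEig d L (V ω) (Set.Icc a b)}).toReal ≤ C * (b - a) * volΛ d L

/-- The Minami estimate (M) on `I`. -/
def MinamiEstimate (d : ℕ) {Ω : Type*} [MeasurableSpace Ω] (Pr : Measure Ω)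
    (V : Ω → ZLat d → ℝ) (I : Set ℝ) : Prop :=
  ∃ C > (0 : ℝ), ∀ L : ℕ, ∀ a b : ℝ, a ≤ b → Set.Icc a b ⊆ I →
    (Pr {ω | 2 ≤ countEig d L (V ω) (Set.Icc a b)}).toReal ≤ C * ((b - a) * volΛ d L) ^ 2

/-- `Nids` is the integrated density of states of `H_ω`: it is the distribution function of
the density of states measure, i.e. the almost sure limit of the normalized finite volume
eigenvalue counting functions (at its continuity points). -/
def IsIDS (d : ℕ) {Ω : Type*} [MeasurableSpace Ω] (Pr : Measure Ω)
    (V : Ω → ZLat d → ℝ) (Nids : ℝ → ℝ) : Prop :=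
  Monotone Nids ∧
  ∀ᵐ ω ∂Pr, ∀ E : ℝ, ContinuousAt Nids E →
    Tendsto (fun L : ℕ => (countEig d L (V ω) (Set.Iic E) : ℝ) / volΛ d L)
      atTop (𝓝 (Nids E))

/-- `E₀` belongs to the set `𝓔`: the integrated density of states `Nids` is differentiable
at `E₀` with derivative `ν₀` in the strong sense
`lim_{|x|+|y|→0} (N(E₀+x) - N(E₀+y))/(x-y) = ν₀`. -/
def StrongDiff (Nids : ℝ → ℝ) (E₀ ν₀ : ℝ) : Prop :=
  HasDerivAt Nids ν₀ E₀ ∧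
  ∀ ε > (0 : ℝ), ∃ η > (0 : ℝ), ∀ x y : ℝ, |x| < η → |y| < η → x ≠ y →
    |(Nids (E₀ + x) - Nids (E₀ + y)) / (x - y) - ν₀| < ε

/-- The number of `j` with `E_j(ω,Λ) ∈ IΛ` whose renormalized spacing
`δE_j = |Λ| c (E_{j+1} - E_j)` is at least `x`. -/
def DLScount (d L : ℕ) (v : ZLat d → ℝ) (c : ℝ) (IΛ : Set ℝ) (x : ℝ) : ℕ :=
  countGen d L fun j =>
    sortedEig d L v j ∈ IΛ ∧
    ∃ h : (j : ℕ) + 1 < nsites d L,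
      x ≤ volΛ d L * c * (sortedEig d L v ⟨(j : ℕ) + 1, h⟩ - sortedEig d L v j)

/-- The empirical distribution of the renormalized level spacings. -/
def DLS (d L : ℕ) (v : ZLat d → ℝ) (c : ℝ) (IΛ : Set ℝ) (x : ℝ) : ℝ :=
  (DLScount d L v c IΛ x : ℝ) / (countEig d L v IΛ : ℝ)

/-- The number of `j` with `E_j(ω,Λ) ∈ IΛ` whose renormalized localization center spacing
`min_{i ≠ j} |x_j - x_i| ⬝ c` is at least `s`. -/
def DCScount (d L : ℕ) (v : ZLat d → ℝ) (x : Fin (nsites d L) → Box d L)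
    (IΛ : Set ℝ) (c s : ℝ) : ℕ :=
  countGen d L fun j =>
    sortedEig d L v j ∈ IΛ ∧ ∀ i, i ≠ j → s ≤ boxDist L (x j) (x i) * c

/-- The empirical distribution of the localization center spacings. -/
def DCS (d L : ℕ) (v : ZLat d → ℝ) (x : Fin (nsites d L) → Box d L)
    (IΛ : Set ℝ) (c s : ℝ) : ℝ :=
  (DCScount d L v x IΛ c s : ℝ) / (countEig d L v IΛ : ℝ)

/-- The supremum norm of a point of `ℤ^d`, as a real number. -/
def latNorm {d : ℕ} (x : ZLat d) : ℝ :=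
  ((Finset.univ.sup fun i => (x i).natAbs : ℕ) : ℝ)

/-- `φ` is a normalized `ℓ²(ℤ^d)` eigenfunction of the infinite volume operator
`H_ω = -Δ + V_ω` with eigenvalue `E`. -/
def IsEigenfunction (d : ℕ) (v : ZLat d → ℝ) (E : ℝ) (φ : ZLat d → ℝ) : Prop :=
  Summable (fun n => φ n ^ 2) ∧ (∑' n, φ n ^ 2) = 1 ∧
  ∀ n : ZLat d,
    (∑ i : Fin d, (φ (Function.update n i (n i + 1)) + φ (Function.update n i (n i - 1))))
      + v n * φ n = E * φ n

/-- `γ` is a localization center of `φ : ℓ²(ℤ^d)`: a maximizer of `|φ|`. -/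
def IsCenter {d : ℕ} (φ : ZLat d → ℝ) (γ : ZLat d) : Prop := ∀ n, |φ n| ≤ |φ γ|

/-- Property (Loc') on `I`: almost surely, every normalized eigenfunction with energy in `I`
decays exponentially away from any of its localization centers. -/
def LocPrime (d : ℕ) {Ω : Type*} [MeasurableSpace Ω] (Pr : Measure Ω)
    (V : Ω → ZLat d → ℝ) (I : Set ℝ) (q : ℝ) : Prop :=
  ∃ γ > (0 : ℝ), ∃ C : Ω → ℝ, Integrable C Pr ∧
    ∀ᵐ ω ∂Pr, 0 < C ω ∧
      ∀ E ∈ I, ∀ φ : ZLat d → ℝ, IsEigenfunction d (V ω) E φ →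
        ∀ xE : ZLat d, IsCenter φ xE → ∀ x : ZLat d,
          |φ x| ≤ C ω * (1 + latNorm xE ^ 2) ^ (q / 2) * Real.exp (-γ * latNorm (x - xE))

/-- The set of eigenvalues of the infinite volume operator `H_ω` lying in `IΛ` and having a
localization center in `Λ_L`. -/
def eigSet (d : ℕ) (v : ZLat d → ℝ) (IΛ : Set ℝ) (L : ℕ) : Set ℝ :=
  {E | E ∈ IΛ ∧ ∃ φ x, IsEigenfunction d v E φ ∧ IsCenter φ x ∧ ∀ i, |x i| ≤ (L : ℤ)}

/-- `N(I_L, L)`: the number of eigenvalues of `H_ω` in `IΛ` with a localization center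
in `Λ_L`. -/
def eigCount (d : ℕ) (v : ZLat d → ℝ) (IΛ : Set ℝ) (L : ℕ) : ℕ := (eigSet d v IΛ L).ncard

/-- The gap from `E` to the next element of `S`. -/
def gapNext (S : Set ℝ) (E : ℝ) : ℝ := sInf ((fun E' => E' - E) '' {E' | E' ∈ S ∧ E < E'})

/-- The empirical distribution of the renormalized spacings `δE_j = |Λ_L| (E_{j+1} - E_j)`
of the eigenvalues of the infinite volume operator `H_ω` in `IΛ` with localization center
in `Λ_L`. -/
def DLSinf (d : ℕ) (v : ZLat d → ℝ) (IΛ : Set ℝ) (L : ℕ) (x : ℝ) : ℝ :=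
  (({E | E ∈ eigSet d v IΛ L ∧ x ≤ volΛ d L * gapNext (eigSet d v IΛ L) E}).ncard : ℝ)
    / (eigCount d v IΛ L : ℝ)

/-- The weight of a Poisson law. -/
def poissonPMF (μ : ℝ) (k : ℕ) : ℝ := Real.exp (-μ) * μ ^ k / (k.factorial : ℝ)

/-- **Diameter of the set of localization centers** (Lemma `le:1`): for any `p > 0` there
is `C_p > 0` such that, with probability at least `1 - |Λ|^{-p}`, for every normalized
eigenvector of `H_ω(Λ)` whose eigenvalue lies in the localized region `I`, the diameter of
its set of localization centers is less than `C_p log |Λ|`. -/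
theorem localization_center_diameter
    (d : ℕ) (hd : 0 < d)
    {Ω : Type*} [MeasurableSpace Ω] (Pr : Measure Ω) [IsProbabilityMeasure Pr]
    (V : Ω → ZLat d → ℝ) (g : ℝ → ℝ) (hV : AndersonPotential d Pr V g)
    -- `I = [a,b]` is a compact interval of `Σ = [-2d,2d] + supp g` lying in the
    -- region of complete localization of `H_ω`
    (a b : ℝ) (hab : a < b)
    (hIsub : Set.Icc a b ⊆ Set.Icc (-(2 * (d : ℝ))) (2 * (d : ℝ)) + tsupport g)
    (hloc : CompleteLocRegion d Pr V (Set.Icc a b))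
 :
    ∀ p > (0 : ℝ), ∃ C > (0 : ℝ), ∀ L : ℕ, 1 ≤ L →
      1 - volΛ d L ^ (-p) ≤
        (Pr {ω | ∀ E ∈ Set.Icc a b, ∀ φ : Box d L → ℝ,
            (ham d L (V ω)).mulVec φ = E • φ → (∑ γ, φ γ ^ 2) = 1 →
            ∀ γ γ' : Box d L, IsLocCenter φ γ → IsLocCenter φ γ' →
              boxDist L γ γ' < C * Real.log (volΛ d L)}).toReal := by
  obtain ⟨γc, hγc, hloc'⟩ := hloc
  intro p hp
  obtain ⟨C, hCpos, hC'⟩ := hloc' p hp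
  refine ⟨(|Real.log C| + C + 1) / γc, by positivity, fun L hL => ?_⟩
  refine (hC' L hL).trans (ENNReal.toReal_mono (measure_ne_top Pr _) (measure_mono ?_))
  intro ω hω
  simp only [Set.mem_setOf_eq] at hω ⊢
  intro E hE φ hφ hnorm γ γ' hγ hγ'
  have hv : 0 < volΛ d L := by unfold volΛ; positivity
  have h23 : (3:ℝ) ≤ ((2*L+1:ℕ):ℝ) := by
    have : 3 ≤ 2*L+1 := by omega
    exact_mod_cast this
  have h3 : (3:ℝ) ≤ volΛ d L := by
    unfold volΛ
    calc (3:ℝ) ≤ 3 ^ d := le_self_pow₀ (by norm_num) hd.ne'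
    _ ≤ ((2*L+1:ℕ):ℝ) ^ d := pow_le_pow_left₀ (by norm_num) h23 d
  have hlv : 1 ≤ Real.log (volΛ d L) := by
    have h1 : (1:ℝ) < Real.log 3 := by
      rw [show (1:ℝ) = Real.log (Real.exp 1) by rw [Real.log_exp]]
      exact Real.log_lt_log (Real.exp_pos 1)
        (Real.exp_one_lt_d9.trans_le (by norm_num))
    have h2 : Real.log 3 ≤ Real.log (volΛ d L) :=
      Real.log_le_log (by norm_num) h3
    linarith
  have hmax : |φ γ'| ≤ C * volΛ d L ^ C * Real.exp (-γc * boxDist L γ γ') :=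
    hω E hE φ hφ hnorm γ hγ γ'
  have hcard : (Fintype.card (Box d L) : ℝ) = volΛ d L := by
    unfold volΛ
    rw [Fintype.card_fun, ZMod.card, Fintype.card_fin]
    push_cast
    ring
  have hsum : (1:ℝ) ≤ volΛ d L * φ γ' ^ 2 := by
    have hsle := Finset.sum_le_card_nsmul Finset.univ (fun γ => φ γ ^ 2) (φ γ' ^ 2)
      (fun γ _ => by
        show φ γ ^ 2 ≤ φ γ' ^ 2
        rw [← sq_abs (φ γ), ← sq_abs (φ γ')]
        exact pow_le_pow_left₀ (abs_nonneg _) (hγ' γ) 2)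
    rw [hnorm, Finset.card_univ, nsmul_eq_mul, hcard] at hsle
    exact hsle
  have hR : 0 < C * volΛ d L ^ C * Real.exp (-γc * boxDist L γ γ') := by positivity
  have hsq : 1 / volΛ d L ≤ (C * volΛ d L ^ C * Real.exp (-γc * boxDist L γ γ')) ^ 2 := by
    have h1 : 1 / volΛ d L ≤ φ γ' ^ 2 := by
      rw [div_le_iff₀ hv]; linarith
    refine h1.trans ?_
    rw [← sq_abs (φ γ')]
    exact pow_le_pow_left₀ (abs_nonneg _) hmax 2
  have hlog := Real.log_le_log (by positivity) hsq
  rw [Real.log_pow, one_div, Real.log_inv] at hlog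
  rw [Real.log_mul (by positivity) (Real.exp_ne_zero _),
    Real.log_mul (ne_of_gt hCpos) (by positivity), Real.log_rpow hv,
    Real.log_exp] at hlog
  push_cast at hlog
  have hlogC : Real.log C ≤ |Real.log C| * Real.log (volΛ d L) := by
    calc Real.log C ≤ |Real.log C| := le_abs_self _
    _ = |Real.log C| * 1 := (mul_one _).symm
    _ ≤ |Real.log C| * Real.log (volΛ d L) :=
        mul_le_mul_of_nonneg_left hlv (abs_nonneg _)
  have hD : 0 ≤ boxDist L γ γ' := by unfold boxDist; positivity
  rw [div_mul_eq_mul_div, lt_div_iff₀ hγc]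
  nlinarith [hlog, hlogC, hlv, hγc, hD]

end
end

section
/- Fix q > 2d. Then there exists γ > 0 such that, ω-almost surely, there exists C_ω > 1 with the following property: if x(E) and x'(E) are two centers of localization for the same energy E ∈ I ∩ σ(H_ω), then |x(E) − x'(E)| ≤ γ^{−2}(log⟨x(E)⟩ + log C_ω)^{1/ξ}. -/
open MeasureTheory ProbabilityTheory Filter Topology Finset
open scoped Pointwise ENNReal

noncomputable section

namespace LocAux

lemma latNorm_nonneg {d : ℕ} (x : ZLat d) : 0 ≤ latNorm x := Nat.cast_nonneg _

lemma latNorm_zero {d : ℕ} : latNorm (0 : ZLat d) = 0 := by simp [latNorm]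

lemma latNorm_neg {d : ℕ} (x : ZLat d) : latNorm (-x) = latNorm x := by simp [latNorm]

lemma latNorm_sub_rev {d : ℕ} (x y : ZLat d) : latNorm (x - y) = latNorm (y - x) := by
  rw [← latNorm_neg (x - y), neg_sub]

lemma latNorm_add_le {d : ℕ} (x y : ZLat d) : latNorm (x + y) ≤ latNorm x + latNorm y := by
  unfold latNorm
  rw [← Nat.cast_add]
  refine Nat.cast_le.mpr (Finset.sup_le fun i _ => ?_)
  refine le_trans (Int.natAbs_add_le (x i) (y i)) (add_le_add ?_ ?_)
  · exact Finset.le_sup (f := fun j => (x j).natAbs) (Finset.mem_univ i)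
  · exact Finset.le_sup (f := fun j => (y j).natAbs) (Finset.mem_univ i)

lemma latNorm_sub_le {d : ℕ} (x y z : ZLat d) :
    latNorm (x - z) ≤ latNorm (x - y) + latNorm (y - z) := by
  have h : x - z = (x - y) + (y - z) := by abel
  rw [h]; exact latNorm_add_le _ _

lemma coord_le_latNorm {d : ℕ} (x : ZLat d) (i : Fin d) :
    ((x i).natAbs : ℝ) ≤ latNorm x := by
  refine Nat.cast_le.mpr ?_
  exact Finset.le_sup (f := fun j => (x j).natAbs) (Finset.mem_univ i)

lemma summable_pow_natAbs {r : ℝ} (h0 : 0 ≤ r) (h1 : r < 1) :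
    Summable fun m : ℤ => r ^ m.natAbs := by
  apply Summable.of_nat_of_neg
  · simpa using summable_geometric_of_lt_one h0 h1
  · simpa using summable_geometric_of_lt_one h0 h1

set_option maxHeartbeats 1000000 in
lemma summable_pi_prod : ∀ (d : ℕ) (f : ℤ → ℝ), (∀ m, 0 ≤ f m) → Summable f →
    Summable fun n : ZLat d => ∏ i, f (n i) := by
  intro d
  induction d with
  | zero =>
    intro f _ _
    exact summable_of_finite_support (Set.toFinite _)
  | succ d ih =>
    intro f hf hsf
    set g : ZLat d → ℝ := fun n => ∏ i, f (n i) with hg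
    have h : Summable fun p : ℤ × ZLat d => f p.1 * g p.2 :=
      hsf.mul_of_nonneg (ih f hf hsf) (fun n => hf n)
        (fun n => Finset.prod_nonneg fun i _ => hf _)
    have h2 := h.comp_injective (Fin.consEquiv (fun _ => ℤ)).symm.injective
    refine h2.congr fun n => ?_
    show f ((Fin.consEquiv (fun _ => ℤ)).symm n).1 * g ((Fin.consEquiv (fun _ => ℤ)).symm n).2 = _
    rw [hg]
    rw [Fin.prod_univ_succ]
    rfl

lemma summable_exp_neg_latNorm {d : ℕ} (hd : 0 < d) {γ : ℝ} (hγ : 0 < γ) :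
    Summable fun n : ZLat d => Real.exp (-γ * latNorm n) := by
  have hdpos : (0:ℝ) < d := by exact_mod_cast hd
  have hr0 : (0:ℝ) ≤ Real.exp (-(γ / d)) := (Real.exp_pos _).le
  have hr1 : Real.exp (-(γ / d)) < 1 := by
    rw [Real.exp_lt_one_iff]
    have : (0:ℝ) < γ / d := by positivity
    linarith
  have hsum := summable_pi_prod d _ (fun m => pow_nonneg hr0 _) (summable_pow_natAbs hr0 hr1)
  refine Summable.of_nonneg_of_le (fun n => (Real.exp_pos _).le) (fun n => ?_) hsum
  have hprod : (∏ i, Real.exp (-(γ / d)) ^ (n i).natAbs)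
      = Real.exp (-(γ / d) * ∑ i, ((n i).natAbs : ℝ)) := by
    rw [Finset.mul_sum, Real.exp_sum]
    refine Finset.prod_congr rfl fun i _ => ?_
    rw [← Real.exp_nat_mul]; ring_nf
  rw [hprod, Real.exp_le_exp]
  have hsum_le : (∑ i, ((n i).natAbs : ℝ)) ≤ d * latNorm n := by
    calc (∑ i, ((n i).natAbs : ℝ)) ≤ ∑ _i : Fin d, latNorm n :=
      Finset.sum_le_sum fun i _ => coord_le_latNorm n i
    _ = d * latNorm n := by simp [Finset.sum_const, nsmul_eq_mul]
  have heq : -(γ / d) * (d * latNorm n) = -γ * latNorm n := by field_simp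
  have hc : -(γ / d) ≤ 0 := neg_nonpos.mpr (by positivity)
  calc -γ * latNorm n = -(γ/d) * (d * latNorm n) := heq.symm
  _ ≤ -(γ/d) * (∑ i, ((n i).natAbs : ℝ)) := mul_le_mul_of_nonpos_left hsum_le hc

lemma exists_center {d : ℕ} {ψ : ZLat d → ℝ} (h : Summable fun n => ψ n ^ 2)
    (h1 : (∑' n, ψ n ^ 2) = 1) : ∃ z, IsCenter ψ z := by
  have hne : ∃ n0, ψ n0 ≠ 0 := by
    by_contra hc
    push_neg at hc
    have hz : (fun n : ZLat d => ψ n ^ 2) = fun _ => (0:ℝ) :=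
      funext fun n => by rw [hc n]; ring
    rw [hz, tsum_zero] at h1
    exact one_ne_zero h1.symm
  obtain ⟨n0, hn0⟩ := hne
  have ht : 0 < ψ n0 ^ 2 := by positivity
  have hfin : {n : ZLat d | ψ n0 ^ 2 ≤ ψ n ^ 2}.Finite := by
    have hlim := h.tendsto_cofinite_zero
    have hev : ∀ᶠ n in Filter.cofinite, ψ n ^ 2 < ψ n0 ^ 2 :=
      hlim.eventually (Filter.Tendsto.eventually_lt_const ht Filter.tendsto_id)
    exact (Filter.eventually_cofinite.mp hev).subset fun n hn => not_lt.mpr hn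
  have hmem : n0 ∈ hfin.toFinset := by simp
  obtain ⟨z, hz, hmax⟩ := Finset.exists_max_image hfin.toFinset (fun n => ψ n ^ 2) ⟨n0, hmem⟩
  refine ⟨z, fun n => ?_⟩
  have habs : ∀ u w : ℝ, u ^ 2 ≤ w ^ 2 → |u| ≤ |w| := by
    intro u w huw
    rw [← Real.sqrt_sq_eq_abs, ← Real.sqrt_sq_eq_abs]
    exact Real.sqrt_le_sqrt huw
  by_cases hn : n ∈ hfin.toFinset
  · exact habs _ _ (hmax n hn)
  · apply habs
    have h2 : ¬ (ψ n0 ^ 2 ≤ ψ n ^ 2) := by simpa using hn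
    have h3 : ψ n0 ^ 2 ≤ ψ z ^ 2 := hmax n0 hmem
    linarith

def ell {d : ℕ} (x : ZLat d) : ℝ := Real.log (Real.sqrt (1 + latNorm x ^ 2))

lemma one_le_sq {d : ℕ} (x : ZLat d) : 1 ≤ Real.sqrt (1 + latNorm x ^ 2) := by
  calc (1:ℝ) = Real.sqrt 1 := by simp
  _ ≤ Real.sqrt (1 + latNorm x ^ 2) := Real.sqrt_le_sqrt (by nlinarith [latNorm_nonneg x])

lemma ell_nonneg {d : ℕ} (x : ZLat d) : 0 ≤ ell x := Real.log_nonneg (one_le_sq x)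

lemma log_one_add_le_self {D : ℝ} (hD : 0 ≤ D) : Real.log (1 + D) ≤ D := by
  have := Real.log_le_sub_one_of_pos (x := 1 + D) (by linarith)
  linarith

lemma log_one_add_le {D ε : ℝ} (hD : 0 ≤ D) (hε : 0 < ε) (hε1 : ε ≤ 1) :
    Real.log (1 + D) ≤ ε * D + Real.log ε⁻¹ := by
  have h1 : (1 + D) = ε⁻¹ * (ε * (1 + D)) := by field_simp
  rw [h1, Real.log_mul (by positivity) (by positivity)]
  have h2 : ε * (1 + D) ≤ 1 + ε * D := by nlinarith
  have h3 : Real.log (ε * (1 + D)) ≤ ε * D := by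
    calc Real.log (ε * (1 + D)) ≤ Real.log (1 + ε * D) :=
      Real.log_le_log (by positivity) h2
    _ ≤ ε * D := log_one_add_le_self (by positivity)
  linarith

lemma ell_le_ell_add {d : ℕ} (x y : ZLat d) :
    ell x ≤ ell y + Real.log (1 + latNorm (x - y)) := by
  set a := latNorm y
  set w := latNorm (x - y)
  have ha : 0 ≤ a := latNorm_nonneg y
  have hw : 0 ≤ w := latNorm_nonneg _
  have hb : latNorm x ≤ a + w := by
    have := latNorm_add_le y (x - y)
    simpa [add_sub_cancel, add_comm] using this
  have hbn : 0 ≤ latNorm x := latNorm_nonneg x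
  have key : Real.sqrt (1 + latNorm x ^ 2) ≤ Real.sqrt (1 + a ^ 2) * (1 + w) := by
    have h1 : 1 + latNorm x ^ 2 ≤ (1 + a ^ 2) * (1 + w) ^ 2 := by
      nlinarith [pow_le_pow_left₀ hbn hb 2, mul_nonneg hw (sq_nonneg (a - 1/2)), sq_nonneg (a*w), hw]
    calc Real.sqrt (1 + latNorm x ^ 2) ≤ Real.sqrt ((1 + a ^ 2) * (1 + w) ^ 2) :=
      Real.sqrt_le_sqrt h1
    _ = Real.sqrt (1 + a ^ 2) * (1 + w) := by
        rw [Real.sqrt_mul (by positivity), Real.sqrt_sq (by positivity)]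
  calc ell x ≤ Real.log (Real.sqrt (1 + a ^ 2) * (1 + w)) :=
    Real.log_le_log (by positivity) key
  _ = ell y + Real.log (1 + w) := Real.log_mul (by positivity) (by positivity)

lemma summable_shift {d : ℕ} {γ : ℝ} (z : ZLat d)
    (hS : Summable fun n : ZLat d => Real.exp (-γ * latNorm n)) :
    Summable fun x : ZLat d => Real.exp (-γ * latNorm (x - z)) :=
  ((Equiv.subRight z).summable_iff
    (f := fun n : ZLat d => Real.exp (-γ * latNorm n))).mpr hS

lemma tsum_shift {d : ℕ} {γ : ℝ} (z : ZLat d) :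
    (∑' x : ZLat d, Real.exp (-γ * latNorm (x - z)))
      = ∑' n : ZLat d, Real.exp (-γ * latNorm n) :=
  (Equiv.subRight z).tsum_eq (fun n : ZLat d => Real.exp (-γ * latNorm n))

lemma one_le_center_mul {d : ℕ} {γ : ℝ}
    (hS : Summable fun n : ZLat d => Real.exp (-γ * latNorm n))
    {u : ZLat d → ℝ} (hsum : Summable fun n => u n ^ 2) (hnorm : (∑' n, u n ^ 2) = 1)
    {z : ZLat d} (hc : IsCenter u z) {M : ℝ}
    (hdec : ∀ x, |u x| ≤ M * Real.exp (-γ * latNorm (x - z))) :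
    1 ≤ |u z| * (M * ∑' n : ZLat d, Real.exp (-γ * latNorm n)) := by
  have htr := summable_shift z hS
  have hterm : ∀ x, u x ^ 2 ≤ |u z| * (M * Real.exp (-γ * latNorm (x - z))) := by
    intro x
    calc u x ^ 2 = |u x| * |u x| := by rw [← sq_abs, sq]
    _ ≤ |u z| * (M * Real.exp (-γ * latNorm (x - z))) :=
      mul_le_mul (hc x) (hdec x) (abs_nonneg _) (abs_nonneg _)
  have h2 := Summable.tsum_le_tsum hterm hsum ((htr.mul_left M).mul_left |u z|)
  rw [hnorm] at h2
  calc (1:ℝ) ≤ ∑' x, |u z| * (M * Real.exp (-γ * latNorm (x - z))) := h2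
  _ = |u z| * (M * ∑' x, Real.exp (-γ * latNorm (x - z))) := by
      rw [tsum_mul_left, tsum_mul_left]
  _ = |u z| * (M * ∑' n : ZLat d, Real.exp (-γ * latNorm n)) := by rw [tsum_shift]

lemma one_le_tsum_exp {d : ℕ} {γ : ℝ}
    (hS : Summable fun n : ZLat d => Real.exp (-γ * latNorm n)) :
    1 ≤ ∑' n : ZLat d, Real.exp (-γ * latNorm n) := by
  have h0 : Real.exp (-γ * latNorm (0 : ZLat d)) = 1 := by
    rw [latNorm_zero, mul_zero, Real.exp_zero]
  calc (1:ℝ) = Real.exp (-γ * latNorm (0 : ZLat d)) := h0.symm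
  _ ≤ ∑' n : ZLat d, Real.exp (-γ * latNorm n) :=
      Summable.le_tsum hS 0 fun n _ => (Real.exp_pos _).le

lemma summable_mul_eigen {d : ℕ} {φ φ' : ZLat d → ℝ}
    (h1 : Summable fun n => φ n ^ 2) (h2 : Summable fun n => φ' n ^ 2) :
    Summable fun n : ZLat d => φ n * φ' n := by
  apply Summable.of_abs
  refine Summable.of_nonneg_of_le (fun n => abs_nonneg _) (fun n => ?_)
    (((h1.add h2).mul_left (1/2)))
  have := sq_nonneg (|φ n| - |φ' n|)
  have h3 : |φ n * φ' n| = |φ n| * |φ' n| := abs_mul _ _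
  have h4 : |φ n| ^ 2 = φ n ^ 2 := sq_abs _
  have h5 : |φ' n| ^ 2 = φ' n ^ 2 := sq_abs _
  nlinarith [abs_nonneg (φ n), abs_nonneg (φ' n)]

lemma combo_eigen {d : ℕ} {v : ZLat d → ℝ} {E : ℝ} {φ φ' : ZLat d → ℝ}
    (h1 : IsEigenfunction d v E φ) (h2 : IsEigenfunction d v E φ') {c σ : ℝ}
    (hσ2 : σ * σ = 1)
    (hc : c ^ 2 * (2 + 2 * (σ * ∑' n, φ n * φ' n)) = 1) :
    IsEigenfunction d v E (fun x => c * (φ x + σ * φ' x)) := by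
  obtain ⟨hs1, hn1, he1⟩ := h1
  obtain ⟨hs2, hn2, he2⟩ := h2
  have hsm := summable_mul_eigen hs1 hs2
  have hsq : ∀ x : ZLat d, (c * (φ x + σ * φ' x)) ^ 2
      = c ^ 2 * φ x ^ 2 + (c ^ 2 * (2 * σ)) * (φ x * φ' x) + (c ^ 2 * (σ * σ)) * φ' x ^ 2 := by
    intro x; ring
  have hsummand : Summable fun x : ZLat d => (c * (φ x + σ * φ' x)) ^ 2 := by
    refine (((hs1.mul_left (c ^ 2)).add (hsm.mul_left (c ^ 2 * (2 * σ)))).add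
      (hs2.mul_left (c ^ 2 * (σ * σ)))).congr fun x => (hsq x).symm
  refine ⟨hsummand, ?_, ?_⟩
  · have heq : (fun x : ZLat d => (c * (φ x + σ * φ' x)) ^ 2)
        = fun x => c ^ 2 * φ x ^ 2 + (c ^ 2 * (2 * σ)) * (φ x * φ' x)
            + (c ^ 2 * (σ * σ)) * φ' x ^ 2 := funext hsq
    rw [heq, Summable.tsum_add ((hs1.mul_left _).add (hsm.mul_left _)) (hs2.mul_left _),
      Summable.tsum_add (hs1.mul_left _) (hsm.mul_left _), tsum_mul_left, tsum_mul_left,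
      tsum_mul_left, hn1, hn2, hσ2]
    linear_combination hc
  · intro n
    have hkey : (∑ i : Fin d, ((fun x => c * (φ x + σ * φ' x)) (Function.update n i (n i + 1))
          + (fun x => c * (φ x + σ * φ' x)) (Function.update n i (n i - 1))))
        = c * (∑ i : Fin d, (φ (Function.update n i (n i + 1)) + φ (Function.update n i (n i - 1))))
          + (c * σ) * (∑ i : Fin d, (φ' (Function.update n i (n i + 1)) + φ' (Function.update n i (n i - 1)))) := by
      rw [Finset.mul_sum, Finset.mul_sum, ← Finset.sum_add_distrib]
      exact Finset.sum_congr rfl fun i _ => by ring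
    rw [hkey]
    have e1 := he1 n
    have e2 := he2 n
    simp only
    linear_combination c * e1 + (c * σ) * e2

lemma rpow_eq_exp_ell {d : ℕ} (x : ZLat d) {q : ℝ} (hq : 0 ≤ q) :
    (1 + latNorm x ^ 2) ^ (q / 2) = Real.exp (q * ell x) := by
  have h1 : (0:ℝ) < 1 + latNorm x ^ 2 := by positivity
  rw [Real.rpow_def_of_pos h1, ell, Real.log_sqrt (by positivity)]
  congr 1
  ring

lemma inv_le_of_one_le_mul {a W : ℝ} (hW : 0 < W) (h : 1 ≤ a * W) : W⁻¹ ≤ a := by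
  rw [inv_eq_one_div, div_le_iff₀ hW]
  linarith

lemma inv_step {u v X : ℝ} (hv : 0 < v) (hX : 0 < X) (h : u * v ≤ X) : u * X⁻¹ ≤ v⁻¹ := by
  rw [← div_eq_mul_inv, div_le_iff₀ hX, inv_mul_eq_div, le_div_iff₀ hv]
  exact h

lemma flip_ineq {p u X : ℝ} (hp : 0 < p) (hX : 0 < X) (h : p⁻¹ ≤ u * X⁻¹) : X ≤ u * p := by
  rw [← div_eq_mul_inv] at h
  rw [inv_eq_one_div, div_le_div_iff₀ hp hX] at h
  linarith

lemma cross_mul {p p' u X : ℝ} (hp : 0 < p) (hp' : 0 < p') (hX : 0 < X)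
    (h : p⁻¹ * p'⁻¹ ≤ u * X⁻¹) : X ≤ u * (p * p') := by
  have h2 : (p * p')⁻¹ ≤ u * X⁻¹ := by rw [mul_inv]; exact h
  exact flip_ineq (by positivity) hX h2

def Aconst (q γ : ℝ) : ℝ := max 1 (2 * (6 * q + 12 * q ^ 2 / γ) / γ)

lemma one_le_Aconst {q γ : ℝ} : 1 ≤ Aconst q γ := le_max_left _ _

end LocAux


namespace LocAux

lemma aux_u1 {S Cw : ℝ} (hS : 1 ≤ S) (hCw : 1 ≤ Cw) : 1 ≤ S * Cw^2 := by nlinarith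
lemma aux_G1 {S Cw : ℝ} (hS : 1 ≤ S) (hCw : 1 ≤ Cw) : 1 < 16 * S^2 * Cw^4 := by
  nlinarith [aux_u1 hS hCw, sq_nonneg (S * Cw^2 - 1)]
lemma aux_G2 {S Cw : ℝ} (hS : 1 ≤ S) (hCw : 1 ≤ Cw) : 2 * (S * Cw^2) ≤ 16 * (S * Cw^2)^2 := by
  nlinarith [aux_u1 hS hCw]
lemma aux_G8 {S Cw : ℝ} (hS : 1 ≤ S) (hCw : 1 ≤ Cw) : 8 * (S * Cw^2) ≤ 16 * (S * Cw^2)^2 := by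
  nlinarith [aux_u1 hS hCw]
lemma aux_half_le {x : ℝ} (hx : 0 < x) (h : 1 ≤ 4 * x^2) : 1/2 ≤ x := by nlinarith
lemma aux_mul_div_half {c γ : ℝ} (hc : c ≠ 0) : c * (γ / (2*c)) = γ / 2 := by
  field_simp
lemma aux_inv_sub_half {W : ℝ} (hW : 0 < W) : W⁻¹ - (2*W)⁻¹ = (2*W)⁻¹ := by
  field_simp
  norm_num
lemma aux_inv_four {W : ℝ} (hW : 0 < W) : (4*W)⁻¹ = (1/2) * (2*W)⁻¹ := by
  rw [show (4:ℝ)*W = 2*(2*W) by ring, mul_inv]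
  ring
lemma aux_sq_combo {c σ u w : ℝ} (hσ : σ = 1 ∨ σ = -1) :
    (c * (u + σ * w))^2 ≤ c^2 * (2 * u^2 + 2 * w^2) := by
  rcases hσ with h | h <;> rw [h] <;> nlinarith [sq_nonneg (c*(u - w)), sq_nonneg (c*(u + w))]

set_option maxHeartbeats 1000000 in
lemma master_bound {d : ℕ} (hd : 0 < d) {q γ Cw : ℝ} (hq : 0 < q) (hγ : 0 < γ)
    (hCw : 1 ≤ Cw) {v : ZLat d → ℝ} {a b : ℝ}
    (hdec : ∀ E ∈ Set.Icc a b, ∀ u : ZLat d → ℝ, IsEigenfunction d v E u →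
      ∀ xE, IsCenter u xE → ∀ x,
        |u x| ≤ Cw * (1 + latNorm xE ^ 2) ^ (q / 2) * Real.exp (-γ * latNorm (x - xE))) :
    ∃ K ≥ (1:ℝ), ∀ E ∈ Set.Icc a b, ∀ φ φ' : ZLat d → ℝ,
      IsEigenfunction d v E φ → IsEigenfunction d v E φ' →
      ∀ xc xc' : ZLat d, IsCenter φ xc → IsCenter φ' xc' →
      latNorm (xc - xc') ≤ Aconst q γ * (ell xc + K) := by
  have hS' := summable_exp_neg_latNorm hd hγ
  obtain ⟨S, hSdef⟩ : ∃ t, t = ∑' n : ZLat d, Real.exp (-γ * latNorm n) := ⟨_, rfl⟩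
  have hS1 : 1 ≤ S := by rw [hSdef]; exact one_le_tsum_exp hS'
  have hSpos : 0 < S := lt_of_lt_of_le one_pos hS1
  have hCwpos : 0 < Cw := lt_of_lt_of_le one_pos hCw
  obtain ⟨G, hGdef⟩ : ∃ t, t = 16 * S ^ 2 * Cw ^ 4 := ⟨_, rfl⟩
  have hG1 : 1 < G := by rw [hGdef]; exact aux_G1 hS1 hCw
  have hGpos : 0 < G := lt_trans one_pos hG1
  obtain ⟨T, hTdef⟩ : ∃ t, t = Real.log G := ⟨_, rfl⟩
  have hT0 : 0 < T := by rw [hTdef]; exact Real.log_pos hG1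
  have hGexp : G = Real.exp T := by rw [hTdef, Real.exp_log hGpos]
  obtain ⟨c, hcdef⟩ : ∃ t, t = 6 * q + 12 * q ^ 2 / γ := ⟨_, rfl⟩
  have hc0 : 0 < c := by rw [hcdef]; positivity
  obtain ⟨ε, hεdef⟩ : ∃ t, t = min 1 (γ / (2 * c)) := ⟨_, rfl⟩
  have hε0 : 0 < ε := by rw [hεdef]; exact lt_min one_pos (by positivity)
  have hε1 : ε ≤ 1 := by rw [hεdef]; exact min_le_left _ _
  have hlogε : 0 ≤ Real.log ε⁻¹ := Real.log_nonneg ((one_le_inv₀ hε0).mpr hε1)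
  have hAc : Aconst q γ = max 1 (2 * c / γ) := by rw [Aconst, hcdef]
  obtain ⟨K, hKdef⟩ : ∃ t, t = max 1 ((2/γ) * (T * (1 + 2*q/γ) + c * Real.log ε⁻¹)) :=
    ⟨_, rfl⟩
  have hK1 : (1:ℝ) ≤ K := by rw [hKdef]; exact le_max_left _ _
  have hK2 : (2/γ) * (T * (1 + 2*q/γ) + c * Real.log ε⁻¹) ≤ K := by
    rw [hKdef]; exact le_max_right _ _
  refine ⟨K, hK1, ?_⟩
  intro E hE φ φ' hEφ hEφ' xc xc' hcφ hcφ'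
  obtain ⟨ℓ, hℓdef⟩ : ∃ t, t = ell xc := ⟨_, rfl⟩
  obtain ⟨ℓ', hℓ'def⟩ : ∃ t, t = ell xc' := ⟨_, rfl⟩
  have hℓ0 : 0 ≤ ℓ := by rw [hℓdef]; exact ell_nonneg xc
  have hℓ'0 : 0 ≤ ℓ' := by rw [hℓ'def]; exact ell_nonneg xc'
  obtain ⟨P, hPdef⟩ : ∃ t, t = Real.exp (q * ℓ) := ⟨_, rfl⟩
  obtain ⟨P', hP'def⟩ : ∃ t, t = Real.exp (q * ℓ') := ⟨_, rfl⟩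
  have hPpos : 0 < P := by rw [hPdef]; exact Real.exp_pos _
  have hP'pos : 0 < P' := by rw [hP'def]; exact Real.exp_pos _
  have hP1 : 1 ≤ P := by rw [hPdef]; exact Real.one_le_exp (by positivity)
  have hP'1 : 1 ≤ P' := by rw [hP'def]; exact Real.one_le_exp (by positivity)
  obtain ⟨D, hDdef⟩ : ∃ t, t = latNorm (xc - xc') := ⟨_, rfl⟩
  have hD0 : 0 ≤ D := by rw [hDdef]; exact latNorm_nonneg _
  obtain ⟨X, hXdef⟩ : ∃ t, t = Real.exp (γ * D) := ⟨_, rfl⟩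
  have hXpos : 0 < X := by rw [hXdef]; exact Real.exp_pos _
  obtain ⟨LD, hLDdef⟩ : ∃ t, t = Real.log (1 + D) := ⟨_, rfl⟩
  have hLD0 : 0 ≤ LD := by rw [hLDdef]; exact Real.log_nonneg (by linarith)
  have hℓ'le : ℓ' ≤ ℓ + LD := by
    rw [hℓ'def, hℓdef, hLDdef, hDdef]
    have h := ell_le_ell_add xc' xc
    rwa [latNorm_sub_rev] at h
  -- decay estimates
  have hdecφ : ∀ x, |φ x| ≤ Cw * P * Real.exp (-γ * latNorm (x - xc)) := by
    intro x
    have h := hdec E hE φ hEφ xc hcφ x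
    rwa [rpow_eq_exp_ell xc hq.le, ← hℓdef, ← hPdef] at h
  have hdecφ' : ∀ x, |φ' x| ≤ Cw * P' * Real.exp (-γ * latNorm (x - xc')) := by
    intro x
    have h := hdec E hE φ' hEφ' xc' hcφ' x
    rwa [rpow_eq_exp_ell xc' hq.le, ← hℓ'def, ← hP'def] at h
  -- lower bounds on the maxima
  have hlowφ : (Cw * P * S)⁻¹ ≤ |φ xc| := by
    refine inv_le_of_one_le_mul (by positivity) ?_
    have h := one_le_center_mul hS' hEφ.1 hEφ.2.1 hcφ (M := Cw * P) hdecφ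
    rw [← hSdef] at h
    exact h
  have hlowφ' : (Cw * P' * S)⁻¹ ≤ |φ' xc'| := by
    refine inv_le_of_one_le_mul (by positivity) ?_
    have h := one_le_center_mul hS' hEφ'.1 hEφ'.2.1 hcφ' (M := Cw * P') hdecφ'
    rw [← hSdef] at h
    exact h
  rw [← hDdef, ← hℓdef]
  -- final arithmetic, given the master exponent inequality
  suffices hfin : γ * D ≤ T * (1 + 2*q/γ) + c * (ℓ + LD) by
    have hεc : c * ε ≤ γ / 2 := by
      have h1 : ε ≤ γ / (2 * c) := by rw [hεdef]; exact min_le_right _ _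
      calc c * ε ≤ c * (γ / (2*c)) := mul_le_mul_of_nonneg_left h1 hc0.le
      _ = γ / 2 := aux_mul_div_half hc0.ne'
    have hLDle : LD ≤ ε * D + Real.log ε⁻¹ := by
      rw [hLDdef]; exact log_one_add_le hD0 hε0 hε1
    have hcLD : c * LD ≤ (γ/2) * D + c * Real.log ε⁻¹ := by
      have h2 : c * LD ≤ c * (ε * D + Real.log ε⁻¹) := mul_le_mul_of_nonneg_left hLDle hc0.le
      have h3 : (c * ε) * D ≤ (γ/2) * D := mul_le_mul_of_nonneg_right hεc hD0
      have h4 : c * (ε * D + Real.log ε⁻¹) = (c * ε) * D + c * Real.log ε⁻¹ := by ring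
      linarith
    have hhalf : (γ/2) * D ≤ T * (1 + 2*q/γ) + c * ℓ + c * Real.log ε⁻¹ := by
      have h5 : c * (ℓ + LD) = c * ℓ + c * LD := by ring
      linarith
    have hDle : D ≤ (2/γ) * (T * (1 + 2*q/γ) + c * Real.log ε⁻¹) + (2*c/γ) * ℓ := by
      have h2 : D = (2/γ) * ((γ/2) * D) := by
        field_simp
      calc D = (2/γ) * ((γ/2) * D) := h2
      _ ≤ (2/γ) * (T * (1 + 2*q/γ) + c * ℓ + c * Real.log ε⁻¹) :=
          mul_le_mul_of_nonneg_left hhalf (by positivity)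
      _ = (2/γ) * (T * (1 + 2*q/γ) + c * Real.log ε⁻¹) + (2*c/γ) * ℓ := by ring
    have hA1 : (2*c/γ) * ℓ ≤ Aconst q γ * ℓ := by
      refine mul_le_mul_of_nonneg_right ?_ hℓ0
      rw [hAc]; exact le_max_right _ _
    have hAK : K ≤ Aconst q γ * K :=
      le_mul_of_one_le_left (by linarith) one_le_Aconst
    have hsplit : Aconst q γ * (ℓ + K) = Aconst q γ * ℓ + Aconst q γ * K := by ring
    linarith
  -- main exponent estimate
  by_cases hcase : X ≤ 2 * (S * Cw^2 * P * P')
  · -- close centers: trivial case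
    have hXle : X ≤ Real.exp (T + q * ℓ + q * ℓ') := by
      have h1 : 2 * (S * Cw^2 * P * P') ≤ G * P * P' := by
        have haux : 2 * (S * Cw^2) ≤ 16 * (S * Cw^2)^2 := aux_G2 hS1 hCw
        have h2 := mul_le_mul_of_nonneg_right haux (by positivity : (0:ℝ) ≤ P * P')
        calc 2 * (S * Cw^2 * P * P') = 2 * (S * Cw^2) * (P * P') := by ring
        _ ≤ 16 * (S * Cw^2)^2 * (P * P') := h2
        _ = G * P * P' := by rw [hGdef]; ring
      calc X ≤ 2 * (S * Cw^2 * P * P') := hcase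
      _ ≤ G * P * P' := h1
      _ = Real.exp (T + q * ℓ + q * ℓ') := by
          rw [hGexp, hPdef, hP'def, ← Real.exp_add, ← Real.exp_add]
    have hexp : γ * D ≤ T + q * ℓ + q * ℓ' := by
      rw [hXdef] at hXle
      exact Real.exp_le_exp.mp hXle
    have hc2q : 2 * q ≤ c := by
      rw [hcdef]
      have h6 : (0:ℝ) ≤ 12 * q^2 / γ := by positivity
      linarith
    have hq_c : q ≤ c := by linarith
    have hTge : T ≤ T * (1 + 2*q/γ) := by
      have h1 : T * (1 + 2*q/γ) = T + T * (2*q/γ) := by ring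
      have h2 : (0:ℝ) ≤ T * (2*q/γ) := by positivity
      linarith
    have hm1 : 2 * q * ℓ ≤ c * ℓ := mul_le_mul_of_nonneg_right hc2q hℓ0
    have hm2 : q * LD ≤ c * LD := mul_le_mul_of_nonneg_right hq_c hLD0
    have hm3 : q * ℓ' ≤ q * ℓ + q * LD := by
      have h7 := mul_le_mul_of_nonneg_left hℓ'le hq.le
      have h8 : q * (ℓ + LD) = q * ℓ + q * LD := by ring
      linarith
    have hsplit2 : c * (ℓ + LD) = c * ℓ + c * LD := by ring
    linarith only [hexp, hTge, hm1, hm2, hm3, hsplit2]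
  · -- distant centers
    push_neg at hcase
    -- cross bounds
    have hcross1 : |φ' xc| ≤ (2 * (Cw * P * S))⁻¹ := by
      have h1 := hdecφ' xc
      rw [← hDdef, neg_mul, Real.exp_neg, ← hXdef] at h1
      refine le_trans h1 (inv_step (by positivity) hXpos ?_)
      calc Cw * P' * (2 * (Cw * P * S)) = 2 * (S * Cw^2 * P * P') := by ring
      _ ≤ X := hcase.le
    have hcross2 : |φ xc'| ≤ (2 * (Cw * P' * S))⁻¹ := by
      have h1 := hdecφ xc'
      rw [latNorm_sub_rev xc' xc, ← hDdef, neg_mul, Real.exp_neg, ← hXdef] at h1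
      refine le_trans h1 (inv_step (by positivity) hXpos ?_)
      calc Cw * P * (2 * (Cw * P' * S)) = 2 * (S * Cw^2 * P * P') := by ring
      _ ≤ X := hcase.le
    -- build the combined eigenfunction ψ
    obtain ⟨α, hαdef⟩ : ∃ t, t = ∑' n, φ n * φ' n := ⟨_, rfl⟩
    obtain ⟨σ, hσdef⟩ : ∃ t : ℝ, t = if 0 ≤ α then (1:ℝ) else -1 := ⟨_, rfl⟩
    have hσcases : σ = 1 ∨ σ = -1 := by
      rw [hσdef]; split
      · exact Or.inl rfl
      · exact Or.inr rfl
    have hσ2 : σ * σ = 1 := by rcases hσcases with h | h <;> rw [h] <;> norm_num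
    have hσabs : |σ| = 1 := by rcases hσcases with h | h <;> rw [h] <;> norm_num
    have hσα : 0 ≤ σ * α := by
      rw [hσdef]
      split
      · rename_i h; rw [one_mul]; exact h
      · rename_i h; push_neg at h; rw [neg_one_mul]; exact neg_nonneg.mpr h.le
    have hNpos : (0:ℝ) < 2 + 2 * (σ * α) := by linarith
    have hN1 : (1:ℝ) ≤ 2 + 2 * (σ * α) := by linarith
    obtain ⟨cψ, hcψdef⟩ : ∃ t, t = (Real.sqrt (2 + 2 * (σ * α)))⁻¹ := ⟨_, rfl⟩
    have hsqrtpos : 0 < Real.sqrt (2 + 2 * (σ * α)) := Real.sqrt_pos.mpr hNpos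
    have hcψpos : 0 < cψ := by rw [hcψdef]; positivity
    have hcψ1 : cψ ≤ 1 := by
      rw [hcψdef]
      have h1 : (1:ℝ) ≤ Real.sqrt (2 + 2 * (σ * α)) := by
        calc (1:ℝ) = Real.sqrt 1 := by simp
        _ ≤ _ := Real.sqrt_le_sqrt hN1
      exact inv_le_one_of_one_le₀ h1
    have hcψsq : cψ ^ 2 * (2 + 2 * (σ * α)) = 1 := by
      rw [hcψdef, ← Real.sqrt_inv, Real.sq_sqrt (by positivity)]
      exact inv_mul_cancel₀ hNpos.ne'
    obtain ⟨ψ, hψdef⟩ : ∃ g : ZLat d → ℝ, g = fun x => cψ * (φ x + σ * φ' x) := ⟨_, rfl⟩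
    have hψx : ∀ x, ψ x = cψ * (φ x + σ * φ' x) := fun x => by rw [hψdef]
    have hEψ : IsEigenfunction d v E ψ := by
      rw [hψdef]
      exact combo_eigen hEφ hEφ' hσ2 (by rw [← hαdef]; exact hcψsq)
    -- cψ ≥ 1/2
    have hcψhalf : 1/2 ≤ cψ := by
      have hterm : ∀ x, ψ x ^ 2 ≤ cψ^2 * (2 * φ x ^ 2 + 2 * φ' x ^ 2) := by
        intro x
        rw [hψx x]
        exact aux_sq_combo hσcases
      have hsr : Summable fun x : ZLat d => cψ^2 * (2 * φ x ^ 2 + 2 * φ' x ^ 2) :=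
        (((hEφ.1.mul_left 2).add (hEφ'.1.mul_left 2)).mul_left (cψ^2))
      have h2 := Summable.tsum_le_tsum hterm hEψ.1 hsr
      rw [hEψ.2.1] at h2
      have h3 : (∑' x : ZLat d, cψ^2 * (2 * φ x ^ 2 + 2 * φ' x ^ 2)) = 4 * cψ^2 := by
        rw [tsum_mul_left, Summable.tsum_add (hEφ.1.mul_left 2) (hEφ'.1.mul_left 2),
          tsum_mul_left, tsum_mul_left, hEφ.2.1, hEφ'.2.1]
        ring
      rw [h3] at h2
      exact aux_half_le hcψpos h2
    -- lower bounds for ψ at xc and xc'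
    have hψxc : (4 * (Cw * P * S))⁻¹ ≤ |ψ xc| := by
      have habs : |φ xc| - |φ' xc| ≤ |φ xc + σ * φ' xc| := by
        have h := abs_add_le (φ xc + σ * φ' xc) (-(σ * φ' xc))
        rw [add_neg_cancel_right, abs_neg, abs_mul, hσabs, one_mul] at h
        linarith
      have hψval : |ψ xc| = cψ * |φ xc + σ * φ' xc| := by
        rw [hψx xc, abs_mul, abs_of_pos hcψpos]
      have hgap : (2 * (Cw * P * S))⁻¹ ≤ |φ xc| - |φ' xc| := by
        have hle := aux_inv_sub_half (show (0:ℝ) < Cw * P * S by positivity)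
        linarith only [hlowφ, hcross1, hle]
      have hnn : (0:ℝ) ≤ |φ xc| - |φ' xc| := le_trans (by positivity) hgap
      calc (4 * (Cw * P * S))⁻¹ = (1/2) * (2 * (Cw * P * S))⁻¹ :=
            aux_inv_four (by positivity)
      _ ≤ (1/2) * (|φ xc| - |φ' xc|) := mul_le_mul_of_nonneg_left hgap (by norm_num)
      _ ≤ cψ * (|φ xc| - |φ' xc|) := mul_le_mul_of_nonneg_right hcψhalf hnn
      _ ≤ cψ * |φ xc + σ * φ' xc| := mul_le_mul_of_nonneg_left habs hcψpos.le
      _ = |ψ xc| := hψval.symm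
    have hψxc' : (4 * (Cw * P' * S))⁻¹ ≤ |ψ xc'| := by
      have habs : |φ' xc'| - |φ xc'| ≤ |φ xc' + σ * φ' xc'| := by
        have h := abs_add_le (σ * φ' xc' + φ xc') (-(φ xc'))
        rw [add_neg_cancel_right, abs_neg, abs_mul, hσabs, one_mul] at h
        rw [add_comm (σ * φ' xc') (φ xc')] at h
        linarith
      have hψval : |ψ xc'| = cψ * |φ xc' + σ * φ' xc'| := by
        rw [hψx xc', abs_mul, abs_of_pos hcψpos]
      have hgap : (2 * (Cw * P' * S))⁻¹ ≤ |φ' xc'| - |φ xc'| := by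
        have hle := aux_inv_sub_half (show (0:ℝ) < Cw * P' * S by positivity)
        linarith only [hlowφ', hcross2, hle]
      have hnn : (0:ℝ) ≤ |φ' xc'| - |φ xc'| := le_trans (by positivity) hgap
      calc (4 * (Cw * P' * S))⁻¹ = (1/2) * (2 * (Cw * P' * S))⁻¹ :=
            aux_inv_four (by positivity)
      _ ≤ (1/2) * (|φ' xc'| - |φ xc'|) := mul_le_mul_of_nonneg_left hgap (by norm_num)
      _ ≤ cψ * (|φ' xc'| - |φ xc'|) := mul_le_mul_of_nonneg_right hcψhalf hnn
      _ ≤ cψ * |φ xc' + σ * φ' xc'| := mul_le_mul_of_nonneg_left habs hcψpos.le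
      _ = |ψ xc'| := hψval.symm
    -- center of ψ
    obtain ⟨z, hzc⟩ := exists_center hEψ.1 hEψ.2.1
    obtain ⟨ℓz, hℓzdef⟩ : ∃ t, t = ell z := ⟨_, rfl⟩
    obtain ⟨Pz, hPzdef⟩ : ∃ t, t = Real.exp (q * ℓz) := ⟨_, rfl⟩
    have hPzpos : 0 < Pz := by rw [hPzdef]; exact Real.exp_pos _
    have hdecψ : ∀ x, |ψ x| ≤ Cw * Pz * Real.exp (-γ * latNorm (x - z)) := by
      intro x
      have h := hdec E hE ψ hEψ z hzc x
      rwa [rpow_eq_exp_ell z hq.le, ← hℓzdef, ← hPzdef] at h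
    obtain ⟨d1, hd1def⟩ : ∃ t, t = latNorm (xc - z) := ⟨_, rfl⟩
    obtain ⟨d2, hd2def⟩ : ∃ t, t = latNorm (xc' - z) := ⟨_, rfl⟩
    have hd10 : 0 ≤ d1 := by rw [hd1def]; exact latNorm_nonneg _
    have hd20 : 0 ≤ d2 := by rw [hd2def]; exact latNorm_nonneg _
    obtain ⟨dm, hdmdef⟩ : ∃ t, t = min d1 d2 := ⟨_, rfl⟩
    have hdm0 : 0 ≤ dm := by rw [hdmdef]; exact le_min hd10 hd20
    have hdm1 : dm ≤ d1 := by rw [hdmdef]; exact min_le_left _ _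
    have hdm2' : dm ≤ d2 := by rw [hdmdef]; exact min_le_right _ _
    -- (iii): main multiplicative estimate
    have hψxc_up : (4 * (Cw * P * S))⁻¹ ≤ Cw * Pz * Real.exp (-γ * d1) := by
      refine le_trans hψxc ?_
      have h := hdecψ xc
      rwa [← hd1def] at h
    have hψxc'_up : (4 * (Cw * P' * S))⁻¹ ≤ Cw * Pz * Real.exp (-γ * d2) := by
      refine le_trans hψxc' ?_
      have h := hdecψ xc'
      rwa [← hd2def] at h
    have hd12 : D ≤ d1 + d2 := by
      rw [hDdef, hd1def, hd2def]
      calc latNorm (xc - xc') ≤ latNorm (xc - z) + latNorm (z - xc') := latNorm_sub_le xc z xc'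
      _ = latNorm (xc - z) + latNorm (xc' - z) := by rw [latNorm_sub_rev z xc']
    have hmain : γ * D ≤ T + q * ℓ + q * ℓ' + 2 * (q * ℓz) := by
      have hmul : (4 * (Cw * P * S))⁻¹ * (4 * (Cw * P' * S))⁻¹
          ≤ (Cw * Pz)^2 * X⁻¹ := by
        have h1 := mul_le_mul hψxc_up hψxc'_up (by positivity) (by positivity)
        refine le_trans h1 ?_
        have h2 : Real.exp (-γ * d1) * Real.exp (-γ * d2) ≤ X⁻¹ := by
          rw [← Real.exp_add, hXdef, ← Real.exp_neg]
          apply Real.exp_le_exp.mpr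
          have h3 := mul_le_mul_of_nonneg_left hd12 hγ.le
          have h4 : γ * (d1 + d2) = γ * d1 + γ * d2 := by ring
          linarith
        calc Cw * Pz * Real.exp (-γ * d1) * (Cw * Pz * Real.exp (-γ * d2))
            = (Cw * Pz)^2 * (Real.exp (-γ * d1) * Real.exp (-γ * d2)) := by ring
        _ ≤ (Cw * Pz)^2 * X⁻¹ := mul_le_mul_of_nonneg_left h2 (by positivity)
      have hXle : X ≤ (Cw * Pz)^2 * ((4 * (Cw * P * S)) * (4 * (Cw * P' * S))) :=
        cross_mul (by positivity) (by positivity) hXpos hmul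
      have hXle2 : X ≤ Real.exp (T + q * ℓ + q * ℓ' + 2 * (q * ℓz)) := by
        refine le_trans hXle ?_
        have heq : (Cw * Pz)^2 * ((4 * (Cw * P * S)) * (4 * (Cw * P' * S)))
            = G * P * P' * (Pz * Pz) := by rw [hGdef]; ring
        rw [heq, hGexp, hPdef, hP'def, hPzdef, ← Real.exp_add, ← Real.exp_add,
          ← Real.exp_add, ← Real.exp_add]
        apply Real.exp_le_exp.mpr
        linarith
      rw [hXdef] at hXle2
      exact Real.exp_le_exp.mp hXle2
    -- (i): location of z
    have hdm : γ * dm ≤ T + 2 * (q * ℓ) + q * ℓ' := by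
      have hup : |ψ z| ≤ 2 * (Cw * (P * P')) * Real.exp (-γ * dm) := by
        have h1 : |ψ z| ≤ |φ z| + |φ' z| := by
          rw [hψx z, abs_mul, abs_of_pos hcψpos]
          calc cψ * |φ z + σ * φ' z| ≤ 1 * |φ z + σ * φ' z| :=
            mul_le_mul_of_nonneg_right hcψ1 (abs_nonneg _)
          _ = |φ z + σ * φ' z| := one_mul _
          _ ≤ |φ z| + |σ * φ' z| := abs_add_le _ _
          _ = |φ z| + |φ' z| := by rw [abs_mul, hσabs, one_mul]
        have h2 : |φ z| ≤ Cw * P * Real.exp (-γ * d1) := by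
          have h := hdecφ z
          rwa [latNorm_sub_rev z xc, ← hd1def] at h
        have h3 : |φ' z| ≤ Cw * P' * Real.exp (-γ * d2) := by
          have h := hdecφ' z
          rwa [latNorm_sub_rev z xc', ← hd2def] at h
        have he1 : Real.exp (-γ * d1) ≤ Real.exp (-γ * dm) := by
          apply Real.exp_le_exp.mpr
          have h5 := mul_le_mul_of_nonneg_left hdm1 hγ.le
          linarith
        have he2 : Real.exp (-γ * d2) ≤ Real.exp (-γ * dm) := by
          apply Real.exp_le_exp.mpr
          have h5 := mul_le_mul_of_nonneg_left hdm2' hγ.le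
          linarith
        have h4 : Cw * P * Real.exp (-γ * d1) ≤ Cw * (P * P') * Real.exp (-γ * dm) := by
          have h6 : Cw * P * Real.exp (-γ * d1) ≤ Cw * P * Real.exp (-γ * dm) :=
            mul_le_mul_of_nonneg_left he1 (by positivity)
          refine le_trans h6 ?_
          have hPP : Cw * P ≤ Cw * (P * P') := by
            have h7 := mul_le_mul_of_nonneg_left hP'1 (by positivity : (0:ℝ) ≤ Cw * P)
            calc Cw * P = Cw * P * 1 := by ring
            _ ≤ Cw * P * P' := h7
            _ = Cw * (P * P') := by ring
          exact mul_le_mul_of_nonneg_right hPP (Real.exp_pos _).le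
        have h5 : Cw * P' * Real.exp (-γ * d2) ≤ Cw * (P * P') * Real.exp (-γ * dm) := by
          have h6 : Cw * P' * Real.exp (-γ * d2) ≤ Cw * P' * Real.exp (-γ * dm) :=
            mul_le_mul_of_nonneg_left he2 (by positivity)
          refine le_trans h6 ?_
          have hPP : Cw * P' ≤ Cw * (P * P') := by
            have h7 := mul_le_mul_of_nonneg_left hP1 (by positivity : (0:ℝ) ≤ Cw * P')
            calc Cw * P' = Cw * P' * 1 := by ring
            _ ≤ Cw * P' * P := h7
            _ = Cw * (P * P') := by ring
          exact mul_le_mul_of_nonneg_right hPP (Real.exp_pos _).le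
        calc |ψ z| ≤ |φ z| + |φ' z| := h1
        _ ≤ Cw * P * Real.exp (-γ * d1) + Cw * P' * Real.exp (-γ * d2) :=
            add_le_add h2 h3
        _ ≤ Cw * (P * P') * Real.exp (-γ * dm) + Cw * (P * P') * Real.exp (-γ * dm) :=
            add_le_add h4 h5
        _ = 2 * (Cw * (P * P')) * Real.exp (-γ * dm) := by ring
      have hlow : (4 * (Cw * P * S))⁻¹ ≤ |ψ z| := le_trans hψxc (hzc xc)
      obtain ⟨Xm, hXmdef⟩ : ∃ t, t = Real.exp (γ * dm) := ⟨_, rfl⟩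
      have hXmpos : 0 < Xm := by rw [hXmdef]; exact Real.exp_pos _
      have hstep : (4 * (Cw * P * S))⁻¹ ≤ 2 * (Cw * (P * P')) * Xm⁻¹ := by
        rw [hXmdef, ← Real.exp_neg, ← neg_mul]
        exact le_trans hlow hup
      have hXmle : Xm ≤ 2 * (Cw * (P * P')) * (4 * (Cw * P * S)) :=
        flip_ineq (by positivity) hXmpos hstep
      have hXmle2 : Xm ≤ Real.exp (T + 2 * (q * ℓ) + q * ℓ') := by
        refine le_trans hXmle ?_
        have h6 : 2 * (Cw * (P * P')) * (4 * (Cw * P * S)) ≤ G * (P * P) * P' := by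
          have haux : 8 * (S * Cw^2) ≤ 16 * (S * Cw^2)^2 := aux_G8 hS1 hCw
          have h7 := mul_le_mul_of_nonneg_right haux (by positivity : (0:ℝ) ≤ P * P * P')
          calc 2 * (Cw * (P * P')) * (4 * (Cw * P * S)) = 8 * (S * Cw^2) * (P * P * P') := by
                ring
          _ ≤ 16 * (S * Cw^2)^2 * (P * P * P') := h7
          _ = G * (P * P) * P' := by rw [hGdef]; ring
        refine le_trans h6 ?_
        rw [hGexp, hPdef, hP'def, ← Real.exp_add, ← Real.exp_add, ← Real.exp_add]
        apply Real.exp_le_exp.mpr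
        linarith
      rw [hXmdef] at hXmle2
      exact Real.exp_le_exp.mp hXmle2
    -- (ii): bound on ℓz
    have hℓz : ℓz ≤ ℓ + LD + dm := by
      rcases le_total d1 d2 with h12 | h21
      · have hmin : dm = d1 := by rw [hdmdef]; exact min_eq_left h12
        have h := ell_le_ell_add z xc
        rw [latNorm_sub_rev z xc, ← hd1def, ← hℓzdef, ← hℓdef] at h
        have hlog : Real.log (1 + d1) ≤ d1 := log_one_add_le_self hd10
        rw [hmin]
        linarith
      · have hmin : dm = d2 := by rw [hdmdef]; exact min_eq_right h21
        have h := ell_le_ell_add z xc'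
        rw [latNorm_sub_rev z xc', ← hd2def, ← hℓzdef, ← hℓ'def] at h
        have hlog : Real.log (1 + d2) ≤ d2 := log_one_add_le_self hd20
        rw [hmin]
        linarith
    -- combine
    have hdm2 : dm ≤ (T + 3 * (q * ℓ) + q * LD) / γ := by
      rw [le_div_iff₀ hγ]
      have hql : q * ℓ' ≤ q * (ℓ + LD) := mul_le_mul_of_nonneg_left hℓ'le hq.le
      have hqle : q * (ℓ + LD) = q * ℓ + q * LD := by ring
      have hcomm : dm * γ = γ * dm := by ring
      linarith only [hdm, hql, hqle, hcomm]
    have h2qdm : 2 * q * dm ≤ 2 * q * ((T + 3 * (q * ℓ) + q * LD) / γ) :=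
      mul_le_mul_of_nonneg_left hdm2 (by positivity)
    have hql' : q * ℓ' ≤ q * (ℓ + LD) := mul_le_mul_of_nonneg_left hℓ'le hq.le
    have hqlz : q * ℓz ≤ q * (ℓ + LD + dm) := mul_le_mul_of_nonneg_left hℓz hq.le
    have hexpand : 2 * q * ((T + 3 * (q * ℓ) + q * LD) / γ)
        = (2*q/γ) * T + (6*q^2/γ) * ℓ + (2*q^2/γ) * LD := by
      field_simp
      ring
    rw [hexpand] at h2qdm
    have hqT : 0 ≤ (2*q/γ) * T := by positivity
    have hc1 : (6*q^2/γ) * ℓ ≤ (12 * q^2/γ) * ℓ := by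
      refine mul_le_mul_of_nonneg_right ?_ hℓ0
      have h9 : (0:ℝ) < q^2/γ := by positivity
      have h10 : 12*q^2/γ - 6*q^2/γ = 6*(q^2/γ) := by ring
      linarith only [h9, h10]
    have hc2 : (2*q^2/γ) * LD ≤ (12 * q^2/γ) * LD := by
      refine mul_le_mul_of_nonneg_right ?_ hLD0
      have h9 : (0:ℝ) < q^2/γ := by positivity
      have h10 : 12*q^2/γ - 2*q^2/γ = 10*(q^2/γ) := by ring
      linarith only [h9, h10]
    have hql0 : 0 ≤ q * ℓ := by positivity
    have hqLD0 : 0 ≤ q * LD := by positivity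
    have hql'e : q * (ℓ + LD) = q * ℓ + q * LD := by ring
    have hqlze : q * (ℓ + LD + dm) = q * ℓ + q * LD + q * dm := by ring
    have hTexp : T * (1 + 2*q/γ) = T + (2*q/γ) * T := by ring
    have hcl : c * ℓ = 6 * (q * ℓ) + (12 * q^2/γ) * ℓ := by rw [hcdef]; ring
    have hcLD3 : c * LD = 6 * (q * LD) + (12 * q^2/γ) * LD := by rw [hcdef]; ring
    have hsplit3 : c * (ℓ + LD) = c * ℓ + c * LD := by ring
    have h2qdm' : 2 * (q * dm) = 2 * q * dm := by ring
    linarith only [hmain, hql', hqlz, h2qdm, hqT, hc1, hc2, hql0, hqLD0,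
      hql'e, hqlze, hTexp, hcl, hcLD3, hsplit3, h2qdm']

end LocAux


/-- **Localization centers of a given energy are close to each other**
(Proposition `pro:1` (1)): under (Loc'), there is `γ > 0` such that `ω`-almost surely,
for some `C_ω > 1`, any two localization centers `x(E), x'(E)` attached to the same energy
`E ∈ I ∩ σ(H_ω)` satisfy `|x(E) - x'(E)| ≤ γ^{-2} (log ⟨x(E)⟩ + log C_ω)^{1/ξ}`. -/
theorem localization_centers_close
    (d : ℕ) (hd : 0 < d)
    {Ω : Type*} [MeasurableSpace Ω] (Pr : Measure Ω) [IsProbabilityMeasure Pr]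
    (V : Ω → ZLat d → ℝ) (g : ℝ → ℝ) (hV : AndersonPotential d Pr V g)
    -- `I = [a,b]` is a compact interval in the region of complete localization,
    -- on which property (Loc') holds
    (a b : ℝ) (hab : a < b)
    (q : ℝ) (hq : 2 * (d : ℝ) < q)
    (hloc : LocPrime d Pr V (Set.Icc a b) q)
    -- `ξ` is the exponent from the localization estimates
    (ξ : ℝ) (hξ0 : 0 < ξ) (hξ1 : ξ ≤ 1)
 :
    ∃ γ > (0 : ℝ), ∀ᵐ ω ∂Pr, ∃ Cω > (1 : ℝ),
      ∀ E ∈ Set.Icc a b, ∀ φ φ' : ZLat d → ℝ,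
        IsEigenfunction d (V ω) E φ → IsEigenfunction d (V ω) E φ' →
        ∀ xc xc' : ZLat d, IsCenter φ xc → IsCenter φ' xc' →
          latNorm (xc - xc') ≤
            γ⁻¹ ^ 2 * (Real.log (Real.sqrt (1 + latNorm xc ^ 2)) + Real.log Cω) ^ (1 / ξ) := by
  obtain ⟨γ0, hγ0, C, hCint, hAS⟩ := hloc
  have hq0 : 0 < q := by
    have h1 : (1:ℝ) ≤ (d:ℝ) := by exact_mod_cast hd
    linarith
  have hA1 : (1:ℝ) ≤ LocAux.Aconst q γ0 := LocAux.one_le_Aconst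
  have hApos : (0:ℝ) < LocAux.Aconst q γ0 := lt_of_lt_of_le one_pos hA1
  refine ⟨(Real.sqrt (LocAux.Aconst q γ0))⁻¹,
    inv_pos.mpr (Real.sqrt_pos.mpr hApos), ?_⟩
  refine hAS.mono ?_
  intro ω hω
  obtain ⟨hCpos, hdecω⟩ := hω
  have hCw : (1:ℝ) ≤ max (C ω) 1 := le_max_right _ _
  have hdec' : ∀ E ∈ Set.Icc a b, ∀ u : ZLat d → ℝ, IsEigenfunction d (V ω) E u →
      ∀ xE, IsCenter u xE → ∀ x,
        |u x| ≤ (max (C ω) 1) * (1 + latNorm xE ^ 2) ^ (q / 2)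
          * Real.exp (-γ0 * latNorm (x - xE)) := by
    intro E hE u hu xE hxE x
    refine le_trans (hdecω E hE u hu xE hxE x) ?_
    have hmax : C ω ≤ max (C ω) 1 := le_max_left _ _
    have hB : (0:ℝ) ≤ (1 + latNorm xE ^ 2) ^ (q / 2) :=
      Real.rpow_nonneg (by positivity) _
    exact mul_le_mul_of_nonneg_right
      (mul_le_mul_of_nonneg_right hmax hB) (Real.exp_pos _).le
  obtain ⟨K, hK1, hbound⟩ := LocAux.master_bound hd hq0 hγ0 hCw hdec'
  refine ⟨Real.exp K, ?_, ?_⟩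
  · have h0 : Real.exp 0 < Real.exp K := Real.exp_lt_exp.mpr (by linarith)
    simpa using h0
  · intro E hE φ φ' hφ hφ' xc xc' hxc hxc'
    have h := hbound E hE φ φ' hφ hφ' xc xc' hxc hxc'
    rw [Real.log_exp]
    have hAeq : (((Real.sqrt (LocAux.Aconst q γ0))⁻¹)⁻¹ : ℝ) ^ 2 = LocAux.Aconst q γ0 := by
      rw [inv_inv, Real.sq_sqrt hApos.le]
    have hellxc : LocAux.ell xc = Real.log (Real.sqrt (1 + latNorm xc ^ 2)) := rfl
    have hell0 : 0 ≤ LocAux.ell xc := LocAux.ell_nonneg xc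
    have hbase : (1:ℝ) ≤ LocAux.ell xc + K := by linarith
    have h1ξ : (1:ℝ) ≤ 1/ξ := by
      rw [le_div_iff₀ hξ0]
      linarith
    have hpow : LocAux.ell xc + K ≤ (LocAux.ell xc + K) ^ ((1:ℝ)/ξ) := by
      calc LocAux.ell xc + K = (LocAux.ell xc + K) ^ ((1:ℝ)) := (Real.rpow_one _).symm
      _ ≤ (LocAux.ell xc + K) ^ ((1:ℝ)/ξ) := Real.rpow_le_rpow_of_exponent_le hbase h1ξ
    calc latNorm (xc - xc') ≤ LocAux.Aconst q γ0 * (LocAux.ell xc + K) := h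
    _ ≤ LocAux.Aconst q γ0 * (LocAux.ell xc + K) ^ ((1:ℝ)/ξ) :=
        mul_le_mul_of_nonneg_left hpow hApos.le
    _ = ((Real.sqrt (LocAux.Aconst q γ0))⁻¹)⁻¹ ^ 2
        * (Real.log (Real.sqrt (1 + latNorm xc ^ 2)) + K) ^ (1/ξ) := by
      rw [hAeq, hellxc]


end
end
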